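/- Let r ≥ 3 be an integer and let H be a linear r-graph on vertex set [n] containing no subgraph isomorphic to C_4^r. Then for every edge e of H, the number of copies of C_3^r in H that contain e as an edge is at most C(r,2) · (4r² - 10r + 7), where C(r,2) = r(r-1)/2. -/

import Mathlib

/-- `e` (indexed cyclically by `i mod ℓ`) forms an `ℓ`-edge linear cycle: the edges are
pairwise distinct, consecutive edges meet in exactly one vertex, non-consecutive edges are
disjoint, and the connecting vertices are pairwise distinct. -/
def IsLinearCycleOf {V : Type} [DecidableEq V] (ℓ : ℕ) (e : ℕ → Finset V) : Prop :=
  (∀ i < ℓ, ∀ j < ℓ, i ≠ j → e i ≠ e j) ∧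
  (∀ i < ℓ, (e i ∩ e ((i + 1) % ℓ)).card = 1) ∧
  (∀ i < ℓ, ∀ j < ℓ, i ≠ j → (i + 1) % ℓ ≠ j → (j + 1) % ℓ ≠ i → e i ∩ e j = ∅) ∧
  (∀ i < ℓ, ∀ j < ℓ, i ≠ j → e i ∩ e ((i + 1) % ℓ) ≠ e j ∩ e ((j + 1) % ℓ))

/-- The hypergraph `H` contains a linear cycle of length `ℓ` (a copy of `C_ℓ^r`). -/
def HasLinearCycle {V : Type} [DecidableEq V] (H : Finset (Finset V)) (ℓ : ℕ) : Prop :=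
  ∃ e : ℕ → Finset V, (∀ i < ℓ, e i ∈ H) ∧ IsLinearCycleOf ℓ e

section Aux

variable {n : ℕ}

lemma my_unique_edge (H : Finset (Finset (Fin n)))
    (hlin : ∀ e ∈ H, ∀ f ∈ H, e ≠ f → (e ∩ f).card ≤ 1)
    {a b : Finset (Fin n)} (ha : a ∈ H) (hb : b ∈ H)
    {u v : Fin n} (huv : u ≠ v) (hua : u ∈ a) (hva : v ∈ a) (hub : u ∈ b) (hvb : v ∈ b) :
    a = b := by
  by_contra hne
  have h := hlin a ha b hb hne
  have : 1 < (a ∩ b).card := Finset.one_lt_card.2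
    ⟨u, Finset.mem_inter.2 ⟨hua, hub⟩, v, Finset.mem_inter.2 ⟨hva, hvb⟩, huv⟩
  omega

lemma my_inter_singleton (H : Finset (Finset (Fin n)))
    (hlin : ∀ e ∈ H, ∀ f ∈ H, e ≠ f → (e ∩ f).card ≤ 1)
    {a b : Finset (Fin n)} (ha : a ∈ H) (hb : b ∈ H) (hne : a ≠ b)
    {u : Fin n} (hu : u ∈ a ∩ b) : a ∩ b = {u} :=
  Finset.eq_singleton_iff_unique_mem.2
    ⟨hu, fun w hw => Finset.card_le_one.mp (hlin a ha b hb hne) w hw u hu⟩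

lemma my_erase_pair {e₀ a b : Finset (Fin n)} (hae : a ≠ e₀) (hbe : b ≠ e₀) :
    (({e₀, a, b} : Finset (Finset (Fin n))).erase e₀) = {a, b} := by
  ext x
  simp only [Finset.mem_erase, Finset.mem_insert, Finset.mem_singleton]
  constructor
  · rintro ⟨hx, h | h | h⟩ <;> tauto
  · rintro (rfl | rfl) <;> tauto

lemma my_tri_structure {e₀ : Finset (Fin n)} {s : Finset (Finset (Fin n))}
    (h3 : s.card = 3) (he : e₀ ∈ s)
    (hf : ∃ f : ℕ → Finset (Fin n), (∀ i < 3, f i ∈ s) ∧ IsLinearCycleOf 3 f) :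
    ∃ a b, a ∈ s ∧ b ∈ s ∧ a ≠ e₀ ∧ b ≠ e₀ ∧ a ≠ b ∧ s = {e₀, a, b} ∧
      (e₀ ∩ a).card = 1 ∧ (e₀ ∩ b).card = 1 ∧ (a ∩ b).card = 1 ∧
      e₀ ∩ a ≠ e₀ ∩ b ∧ e₀ ∩ a ≠ a ∩ b ∧ e₀ ∩ b ≠ a ∩ b := by
  obtain ⟨f, hmem, hdist, hcons, -, hconn⟩ := hf
  have m0 : f 0 ∈ s := hmem 0 (by norm_num)
  have m1 : f 1 ∈ s := hmem 1 (by norm_num)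
  have m2 : f 2 ∈ s := hmem 2 (by norm_num)
  have d01 : f 0 ≠ f 1 := hdist 0 (by norm_num) 1 (by norm_num) (by norm_num)
  have d02 : f 0 ≠ f 2 := hdist 0 (by norm_num) 2 (by norm_num) (by norm_num)
  have d12 : f 1 ≠ f 2 := hdist 1 (by norm_num) 2 (by norm_num) (by norm_num)
  have c01 : (f 0 ∩ f 1).card = 1 := by have := hcons 0 (by norm_num); norm_num at this; exact this
  have c12 : (f 1 ∩ f 2).card = 1 := by have := hcons 1 (by norm_num); norm_num at this; exact this
  have c20 : (f 2 ∩ f 0).card = 1 := by have := hcons 2 (by norm_num); norm_num at this; exact this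
  have n01 : f 0 ∩ f 1 ≠ f 1 ∩ f 2 := by
    have := hconn 0 (by norm_num) 1 (by norm_num) (by norm_num); norm_num at this; exact this
  have n02 : f 0 ∩ f 1 ≠ f 2 ∩ f 0 := by
    have := hconn 0 (by norm_num) 2 (by norm_num) (by norm_num); norm_num at this; exact this
  have n12 : f 1 ∩ f 2 ≠ f 2 ∩ f 0 := by
    have := hconn 1 (by norm_num) 2 (by norm_num) (by norm_num); norm_num at this; exact this
  have hseq : s = {f 0, f 1, f 2} := by
    refine (Finset.eq_of_subset_of_card_le ?_ ?_).symm
    · intro x hx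
      simp only [Finset.mem_insert, Finset.mem_singleton] at hx
      rcases hx with rfl | rfl | rfl <;> assumption
    · rw [h3]
      rw [Finset.card_insert_of_notMem (by simp [d01, d02]),
        Finset.card_insert_of_notMem (by simp [d12]), Finset.card_singleton]
  have hes : e₀ = f 0 ∨ e₀ = f 1 ∨ e₀ = f 2 := by
    have := he; rw [hseq] at this
    simpa using this
  rcases hes with h | h | h
  · subst h
    refine ⟨f 1, f 2, m1, m2, d01.symm, d02.symm, d12, hseq, c01, ?_, c12, ?_, n01, ?_⟩
    · rw [Finset.inter_comm]; exact c20
    · rw [Finset.inter_comm (f 0) (f 2)]; exact n02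
    · rw [Finset.inter_comm (f 0) (f 2)]; exact Ne.symm n12
  · subst h
    refine ⟨f 2, f 0, m2, m0, d12.symm, d01, Ne.symm d02, ?_, c12, ?_, c20, ?_, n12, ?_⟩
    · rw [hseq]; ext u; simp only [Finset.mem_insert, Finset.mem_singleton]; tauto
    · rw [Finset.inter_comm]; exact c01
    · rw [Finset.inter_comm (f 1) (f 0)]; exact Ne.symm n01
    · rw [Finset.inter_comm (f 1) (f 0)]; exact n02
  · subst h
    refine ⟨f 0, f 1, m0, m1, d02, d12, d01, ?_, c20, ?_, c01, ?_, Ne.symm n02, ?_⟩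
    · rw [hseq]; ext u; simp only [Finset.mem_insert, Finset.mem_singleton]; tauto
    · rw [Finset.inter_comm]; exact c12
    · rw [Finset.inter_comm (f 2) (f 1)]; exact Ne.symm n12
    · rw [Finset.inter_comm (f 2) (f 1)]; exact Ne.symm n01

lemma my_fiber_structure (H : Finset (Finset (Fin n)))
    (hlin : ∀ e ∈ H, ∀ f ∈ H, e ≠ f → (e ∩ f).card ≤ 1)
    {e₀ : Finset (Fin n)} {x y : Fin n} (hxy : x ≠ y)
    {s : Finset (Finset (Fin n))}
    (hsub : s ⊆ H) (h3 : s.card = 3) (he : e₀ ∈ s)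
    (hf : ∃ f : ℕ → Finset (Fin n), (∀ i < 3, f i ∈ s) ∧ IsLinearCycleOf 3 f)
    (hkey : e₀ ∩ ((s.erase e₀).sup id) = {x, y}) :
    ∃ a b z, a ∈ H ∧ b ∈ H ∧ a ≠ e₀ ∧ b ≠ e₀ ∧ a ≠ b ∧ s = {e₀, a, b} ∧
      e₀ ∩ a = {x} ∧ e₀ ∩ b = {y} ∧ a ∩ b = {z} ∧ z ∉ e₀ := by
  obtain ⟨a, b, has, hbs, hae, hbe, hab, hs, ca, cb, cab, nab, naab, nbab⟩ :=
    my_tri_structure h3 he hf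
  obtain ⟨xa, hxa⟩ := Finset.card_eq_one.mp ca
  obtain ⟨xb, hxb⟩ := Finset.card_eq_one.mp cb
  obtain ⟨z, hz⟩ := Finset.card_eq_one.mp cab
  have hzne : z ∉ e₀ := by
    intro hze₀
    have hza : z ∈ a ∩ b := by rw [hz]; exact Finset.mem_singleton_self z
    have h1 : z = xa := by
      have : z ∈ e₀ ∩ a := Finset.mem_inter.2 ⟨hze₀, (Finset.mem_inter.1 hza).1⟩
      rw [hxa] at this; exact Finset.mem_singleton.1 this
    have h2 : z = xb := by
      have : z ∈ e₀ ∩ b := Finset.mem_inter.2 ⟨hze₀, (Finset.mem_inter.1 hza).2⟩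
      rw [hxb] at this; exact Finset.mem_singleton.1 this
    exact nab (by rw [hxa, hxb, ← h1, ← h2])
  have hkey2 : ({xa, xb} : Finset (Fin n)) = {x, y} := by
    rw [← hkey, hs, my_erase_pair hae hbe]
    have : ({a, b} : Finset (Finset (Fin n))).sup id = a ∪ b := by
      simp [Finset.sup_insert, Finset.sup_singleton]
    rw [this, Finset.inter_union_distrib_left, hxa, hxb]
    rfl
  have hxmem : x ∈ ({xa, xb} : Finset (Fin n)) := by rw [hkey2]; simp
  have hymem : y ∈ ({xa, xb} : Finset (Fin n)) := by rw [hkey2]; simp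
  simp only [Finset.mem_insert, Finset.mem_singleton] at hxmem hymem
  have haH : a ∈ H := hsub has
  have hbH : b ∈ H := hsub hbs
  rcases hxmem with hxx | hxx
  · have hyy : y = xb := by
      rcases hymem with h | h
      · exact absurd (hxx.trans h.symm) hxy
      · exact h
    exact ⟨a, b, z, haH, hbH, hae, hbe, hab, hs, by rw [hxa, hxx], by rw [hxb, hyy], hz, hzne⟩
  · have hyy : y = xa := by
      rcases hymem with h | h
      · exact h
      · exact absurd (hxx.trans h.symm) hxy
    refine ⟨b, a, z, hbH, haH, hbe, hae, hab.symm, ?_, by rw [hxb, hxx], by rw [hxa, hyy],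
      by rw [Finset.inter_comm]; exact hz, hzne⟩
    rw [hs]; ext u; simp only [Finset.mem_insert, Finset.mem_singleton]; tauto

lemma my_half_bound (r : ℕ) (H : Finset (Finset (Fin n)))
    (hcard : ∀ e ∈ H, e.card = r)
    (hlin : ∀ e ∈ H, ∀ f ∈ H, e ≠ f → (e ∩ f).card ≤ 1)
    {e₀ : Finset (Fin n)} {x y : Fin n} (hxy : x ≠ y) (hy : y ∈ e₀)
    {f₀ : Finset (Fin n)} (hf₀H : f₀ ∈ H) (hf₀ : e₀ ∩ f₀ = {x})
    (G : Finset (Finset (Finset (Fin n))))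
    (hG : ∀ s ∈ G, ∃ a b z, a ∈ H ∧ b ∈ H ∧ a ≠ e₀ ∧ b ≠ e₀ ∧ a ≠ b ∧ s = {e₀, a, b} ∧
      e₀ ∩ a = {x} ∧ e₀ ∩ b = {y} ∧ a ∩ b = {z} ∧ z ∉ e₀ ∧ (f₀ ∩ b).Nonempty) :
    G.card ≤ (r - 1) * (r - 1) := by
  classical
  have hxf₀ : x ∈ f₀ :=
    (Finset.mem_inter.1 (hf₀ ▸ Finset.mem_singleton_self x)).2
  have hxe₀ : x ∈ e₀ :=
    (Finset.mem_inter.1 (hf₀ ▸ Finset.mem_singleton_self x)).1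
  have hyf₀ : y ∉ f₀ := by
    intro hyf
    have : y ∈ e₀ ∩ f₀ := Finset.mem_inter.2 ⟨hy, hyf⟩
    rw [hf₀, Finset.mem_singleton] at this
    exact hxy this.symm
  set Q : Fin n → Finset (Finset (Fin n)) → Prop :=
    fun w s => ∃ b' ∈ s, b' ≠ e₀ ∧ y ∈ b' ∧ w ∈ b' with hQ
  have hcover : G ⊆ (f₀.erase x).biUnion (fun w => G.filter (Q w)) := by
    intro s hs
    obtain ⟨a, b, z, haH, hbH, hae, hbe, hab, hsEq, hea, heb, hzab, hzne, hnc⟩ := hG s hs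
    obtain ⟨w, hw⟩ := hnc
    obtain ⟨hwf₀, hwb⟩ := Finset.mem_inter.1 hw
    have hxb : x ∉ b := by
      intro hxb
      have : x ∈ e₀ ∩ b := Finset.mem_inter.2 ⟨hxe₀, hxb⟩
      rw [heb, Finset.mem_singleton] at this
      exact hxy this
    have hwx : w ≠ x := fun h => hxb (h ▸ hwb)
    have hyb : y ∈ b := (Finset.mem_inter.1 (heb ▸ Finset.mem_singleton_self y)).2
    refine Finset.mem_biUnion.2 ⟨w, Finset.mem_erase.2 ⟨hwx, hwf₀⟩,
      Finset.mem_filter.2 ⟨hs, b, ?_, hbe, hyb, hwb⟩⟩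
    rw [hsEq]; simp
  have hbound : ∀ w ∈ f₀.erase x, (G.filter (Q w)).card ≤ r - 1 := by
    intro w hw
    obtain ⟨hwx, hwf₀⟩ := Finset.mem_erase.1 hw
    have hwy : w ≠ y := fun h => hyf₀ (h ▸ hwf₀)
    rcases (G.filter (Q w)).eq_empty_or_nonempty with hE | ⟨s₁, hs₁⟩
    · simp [hE]
    obtain ⟨hs₁G, b', hb's, hb'e, hyb', hwb'⟩ := Finset.mem_filter.1 hs₁
    obtain ⟨a₁, b₁, z₁, ha₁H, hb₁H, ha₁e, hb₁e, ha₁b₁, hs₁Eq, hea₁, heb₁, hz₁, hz₁ne, hnc₁⟩ :=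
      hG s₁ hs₁G
    have hb'b₁ : b' = b₁ := by
      have hmem : b' ∈ ({e₀, a₁, b₁} : Finset (Finset (Fin n))) := hs₁Eq ▸ hb's
      simp only [Finset.mem_insert, Finset.mem_singleton] at hmem
      rcases hmem with rfl | rfl | rfl
      · exact absurd rfl hb'e
      · exfalso
        have : y ∈ e₀ ∩ b' := Finset.mem_inter.2 ⟨hy, hyb'⟩
        rw [hea₁, Finset.mem_singleton] at this
        exact hxy this.symm
      · rfl
    rw [hb'b₁] at hyb' hwb'
    -- every s in the fiber has the same b-edge, namely b₁
    have hcommon : ∀ s ∈ G.filter (Q w),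
        ∃ a z, a ∈ H ∧ a ≠ e₀ ∧ a ≠ b₁ ∧ s = {e₀, a, b₁} ∧ e₀ ∩ a = {x} ∧
          a ∩ b₁ = {z} ∧ z ∉ e₀ := by
      intro s hsQ
      obtain ⟨hsG, b'', hb''s, hb''e, hyb'', hwb''⟩ := Finset.mem_filter.1 hsQ
      obtain ⟨a, b, z, haH, hbH, hae, hbe, hab, hsEq, hea, heb, hzab, hzne, hnc⟩ := hG s hsG
      have hb''b : b'' = b := by
        have hmem : b'' ∈ ({e₀, a, b} : Finset (Finset (Fin n))) := hsEq ▸ hb''s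
        simp only [Finset.mem_insert, Finset.mem_singleton] at hmem
        rcases hmem with rfl | rfl | rfl
        · exact absurd rfl hb''e
        · exfalso
          have : y ∈ e₀ ∩ b'' := Finset.mem_inter.2 ⟨hy, hyb''⟩
          rw [hea, Finset.mem_singleton] at this
          exact hxy this.symm
        · rfl
      rw [hb''b] at hyb'' hwb''
      have hyb : y ∈ b := (Finset.mem_inter.1 (heb ▸ Finset.mem_singleton_self y)).2
      have hbb₁ : b = b₁ := my_unique_edge H hlin hbH hb₁H hwy hwb'' hyb hwb' hyb'
      rw [hbb₁] at hab hsEq hzab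
      exact ⟨a, z, haH, hae, hab, hsEq, hea, hzab, hzne⟩
    have hyb₁ : y ∈ b₁ := hyb'
    calc (G.filter (Q w)).card
        ≤ ((b₁.erase y).image (fun v => ({v} : Finset (Fin n)))).card := by
          apply Finset.card_le_card_of_injOn (fun s => (s.erase e₀).inf id)
          · intro s hsQ
            obtain ⟨a, z, haH, hae, hab, hsEq, hea, hzab, hzne⟩ := hcommon s hsQ
            have hinf : (s.erase e₀).inf id = {z} := by
              rw [hsEq, my_erase_pair hae hb₁e]
              simp only [Finset.inf_insert, Finset.inf_singleton, id_eq, Finset.inf_eq_inter]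
              exact hzab
            dsimp only
            rw [Finset.mem_coe, hinf]
            refine Finset.mem_image.2 ⟨z, Finset.mem_erase.2 ⟨fun h => hzne (h ▸ hy), ?_⟩, rfl⟩
            exact (Finset.mem_inter.1 (hzab ▸ Finset.mem_singleton_self z)).2
          · intro s hsQ t htQ hst
            simp only [Finset.mem_coe] at hsQ htQ
            obtain ⟨a, z, haH, hae, hab, hsEq, hea, hzab, hzne⟩ := hcommon s hsQ
            obtain ⟨a', z', ha'H, ha'e, ha'b, htEq, hea', hz'ab, hz'ne⟩ := hcommon t htQ
            have hinf : (s.erase e₀).inf id = {z} := by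
              rw [hsEq, my_erase_pair hae hb₁e]
              simp only [Finset.inf_insert, Finset.inf_singleton, id_eq, Finset.inf_eq_inter]
              exact hzab
            have hinf' : (t.erase e₀).inf id = {z'} := by
              rw [htEq, my_erase_pair ha'e hb₁e]
              simp only [Finset.inf_insert, Finset.inf_singleton, id_eq, Finset.inf_eq_inter]
              exact hz'ab
            dsimp only at hst
            rw [hinf, hinf'] at hst
            have hzz : z = z' := Finset.singleton_injective hst
            rw [← hzz] at hz'ab
            have hxa : x ∈ a := (Finset.mem_inter.1 (hea ▸ Finset.mem_singleton_self x)).2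
            have hxa' : x ∈ a' := (Finset.mem_inter.1 (hea' ▸ Finset.mem_singleton_self x)).2
            have hza : z ∈ a := (Finset.mem_inter.1 (hzab ▸ Finset.mem_singleton_self z)).1
            have hza' : z ∈ a' := (Finset.mem_inter.1 (hz'ab ▸ Finset.mem_singleton_self z)).1
            have hxz : x ≠ z := fun h => hzne (h ▸ hxe₀)
            have haa : a = a' := my_unique_edge H hlin haH ha'H hxz hxa hza hxa' hza'
            rw [hsEq, htEq, haa]
      _ ≤ (b₁.erase y).card := Finset.card_image_le
      _ ≤ r - 1 := by
          rw [Finset.card_erase_of_mem hyb₁, hcard b₁ hb₁H]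
  calc G.card ≤ ((f₀.erase x).biUnion (fun w => G.filter (Q w))).card :=
        Finset.card_le_card hcover
    _ ≤ ∑ w ∈ f₀.erase x, (G.filter (Q w)).card := Finset.card_biUnion_le
    _ ≤ (f₀.erase x).card * (r - 1) := by
        rw [← smul_eq_mul]
        exact Finset.sum_le_card_nsmul _ _ _ hbound
    _ = (r - 1) * (r - 1) := by
        rw [Finset.card_erase_of_mem hxf₀, hcard f₀ hf₀H]

lemma my_fiber_bound (r : ℕ) (H : Finset (Finset (Fin n)))
    (hcard : ∀ e ∈ H, e.card = r)
    (hlin : ∀ e ∈ H, ∀ f ∈ H, e ≠ f → (e ∩ f).card ≤ 1)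
    (hC4 : ¬ HasLinearCycle H 4)
    {e₀ : Finset (Fin n)} {x y : Fin n} (hxy : x ≠ y) (hx : x ∈ e₀) (hy : y ∈ e₀)
    (F : Finset (Finset (Finset (Fin n))))
    (hF : ∀ s ∈ F, ∃ a b z, a ∈ H ∧ b ∈ H ∧ a ≠ e₀ ∧ b ≠ e₀ ∧ a ≠ b ∧ s = {e₀, a, b} ∧
      e₀ ∩ a = {x} ∧ e₀ ∩ b = {y} ∧ a ∩ b = {z} ∧ z ∉ e₀) :
    F.card ≤ 2 * ((r - 1) * (r - 1)) := by
  classical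
  rcases F.eq_empty_or_nonempty with hE | ⟨s₀, hs₀⟩
  · simp [hE]
  obtain ⟨f₀, g₀, z₀, hf₀H, hg₀H, hf₀e, hg₀e, hfg, hs₀Eq, hef₀, heg₀, hz₀, hz₀ne⟩ := hF s₀ hs₀
  have hxf₀ : x ∈ f₀ := (Finset.mem_inter.1 (hef₀ ▸ Finset.mem_singleton_self x)).2
  have hyg₀ : y ∈ g₀ := (Finset.mem_inter.1 (heg₀ ▸ Finset.mem_singleton_self y)).2
  have hyf₀ : y ∉ f₀ := by
    intro h
    have : y ∈ e₀ ∩ f₀ := Finset.mem_inter.2 ⟨hy, h⟩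
    rw [hef₀, Finset.mem_singleton] at this
    exact hxy this.symm
  have hxg₀ : x ∉ g₀ := by
    intro h
    have : x ∈ e₀ ∩ g₀ := Finset.mem_inter.2 ⟨hx, h⟩
    rw [heg₀, Finset.mem_singleton] at this
    exact hxy this
  have hz₀f : z₀ ∈ f₀ := (Finset.mem_inter.1 (hz₀ ▸ Finset.mem_singleton_self z₀)).1
  have hz₀g : z₀ ∈ g₀ := (Finset.mem_inter.1 (hz₀ ▸ Finset.mem_singleton_self z₀)).2
  set FC := F.filter (fun s => ∃ b' ∈ s, b' ≠ e₀ ∧ y ∈ b' ∧ (f₀ ∩ b').Nonempty) with hFC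
  set FD := F.filter (fun s => ∃ a' ∈ s, a' ≠ e₀ ∧ x ∈ a' ∧ (a' ∩ g₀).Nonempty) with hFD
  have hcover : F ⊆ FC ∪ FD := by
    intro s hs
    obtain ⟨a, b, z, haH, hbH, hae, hbe, hab, hsEq, hea, heb, hzab, hzne⟩ := hF s hs
    have hxa : x ∈ a := (Finset.mem_inter.1 (hea ▸ Finset.mem_singleton_self x)).2
    have hyb : y ∈ b := (Finset.mem_inter.1 (heb ▸ Finset.mem_singleton_self y)).2
    have hza : z ∈ a := (Finset.mem_inter.1 (hzab ▸ Finset.mem_singleton_self z)).1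
    have hzb : z ∈ b := (Finset.mem_inter.1 (hzab ▸ Finset.mem_singleton_self z)).2
    have hbs : b ∈ s := by rw [hsEq]; simp
    have has : a ∈ s := by rw [hsEq]; simp
    by_cases hc : (f₀ ∩ b).Nonempty
    · exact Finset.mem_union_left _ (Finset.mem_filter.2 ⟨hs, b, hbs, hbe, hyb, hc⟩)
    by_cases hd : (a ∩ g₀).Nonempty
    · exact Finset.mem_union_right _ (Finset.mem_filter.2 ⟨hs, a, has, hae, hxa, hd⟩)
    exfalso
    have hc' : f₀ ∩ b = ∅ := Finset.not_nonempty_iff_eq_empty.1 hc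
    have hd' : a ∩ g₀ = ∅ := Finset.not_nonempty_iff_eq_empty.1 hd
    have haf : a ≠ f₀ := by
      intro h
      exact hc ⟨z, by rw [← h, hzab]; exact Finset.mem_singleton_self z⟩
    have hbg : b ≠ g₀ := by
      intro h
      exact hd ⟨z, by rw [← h, hzab]; exact Finset.mem_singleton_self z⟩
    have hag : a ≠ g₀ := fun h => hxg₀ (h ▸ hxa)
    have hbf : b ≠ f₀ := fun h => hyf₀ (h ▸ hyb)
    have hE3 : a ∩ f₀ = {x} :=
      my_inter_singleton H hlin haH hf₀H haf (Finset.mem_inter.2 ⟨hxa, hxf₀⟩)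
    have hE1 : g₀ ∩ b = {y} :=
      my_inter_singleton H hlin hg₀H hbH (Ne.symm hbg) (Finset.mem_inter.2 ⟨hyg₀, hyb⟩)
    have hE2 : b ∩ a = {z} := by rw [Finset.inter_comm]; exact hzab
    have hxz : x ≠ z := fun hh => hzne (hh ▸ hx)
    have hzz₀ : z ≠ z₀ := by
      intro h
      exact haf (my_unique_edge H hlin haH hf₀H hxz hxa hza hxf₀ (h ▸ hz₀f))
    -- pairwise distinct edges (all directions)
    have n1 : f₀ ≠ g₀ := hfg
    have n2 : g₀ ≠ f₀ := hfg.symm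
    have n3 : f₀ ≠ b := hbf.symm
    have n4 : b ≠ f₀ := hbf
    have n5 : f₀ ≠ a := haf.symm
    have n6 : a ≠ f₀ := haf
    have n7 : g₀ ≠ b := hbg.symm
    have n8 : b ≠ g₀ := hbg
    have n9 : g₀ ≠ a := hag.symm
    have n10 : a ≠ g₀ := hag
    have n11 : b ≠ a := hab.symm
    have n12 : a ≠ b := hab
    -- cards of consecutive intersections
    have k0 : (f₀ ∩ g₀).card = 1 := by rw [hz₀]; simp
    have k1 : (g₀ ∩ b).card = 1 := by rw [hE1]; simp
    have k2 : (b ∩ a).card = 1 := by rw [hE2]; simp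
    have k3 : (a ∩ f₀).card = 1 := by rw [hE3]; simp
    -- empties
    have m02 : f₀ ∩ b = ∅ := hc'
    have m20 : b ∩ f₀ = ∅ := by rw [Finset.inter_comm]; exact hc'
    have m13 : g₀ ∩ a = ∅ := by rw [Finset.inter_comm]; exact hd'
    have m31 : a ∩ g₀ = ∅ := hd'
    -- distinctness of connecting singletons
    have ez₀y : z₀ ≠ y := fun h => hz₀ne (h ▸ hy)
    have ez₀x : z₀ ≠ x := fun h => hz₀ne (h ▸ hx)
    have ezy : z ≠ y := fun h => hzne (h ▸ hy)
    have ezx : z ≠ x := fun h => hzne (h ▸ hx)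
    have q01 : f₀ ∩ g₀ ≠ g₀ ∩ b := by rw [hz₀, hE1]; simpa using ez₀y
    have q10 : g₀ ∩ b ≠ f₀ ∩ g₀ := q01.symm
    have q02 : f₀ ∩ g₀ ≠ b ∩ a := by rw [hz₀, hE2]; simpa using (Ne.symm hzz₀)
    have q20 : b ∩ a ≠ f₀ ∩ g₀ := q02.symm
    have q03 : f₀ ∩ g₀ ≠ a ∩ f₀ := by rw [hz₀, hE3]; simpa using ez₀x
    have q30 : a ∩ f₀ ≠ f₀ ∩ g₀ := q03.symm
    have q12 : g₀ ∩ b ≠ b ∩ a := by rw [hE1, hE2]; simpa using (Ne.symm ezy)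
    have q21 : b ∩ a ≠ g₀ ∩ b := q12.symm
    have q13 : g₀ ∩ b ≠ a ∩ f₀ := by rw [hE1, hE3]; simpa using (Ne.symm hxy)
    have q31 : a ∩ f₀ ≠ g₀ ∩ b := q13.symm
    have q23 : b ∩ a ≠ a ∩ f₀ := by rw [hE2, hE3]; simpa using ezx
    have q32 : a ∩ f₀ ≠ b ∩ a := q23.symm
    apply hC4
    refine ⟨fun i => if i = 0 then f₀ else if i = 1 then g₀ else if i = 2 then b else a,
      ?_, ?_, ?_, ?_, ?_⟩
    · intro i hi
      interval_cases i <;> norm_num <;> assumption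
    · intro i hi j hj hij
      interval_cases i <;> interval_cases j <;> first | omega | (norm_num; assumption)
    · intro i hi
      interval_cases i <;> norm_num <;> assumption
    · intro i hi j hj hij h2 h3
      interval_cases i <;> interval_cases j <;> first | omega | (norm_num; assumption)
    · intro i hi j hj hij
      interval_cases i <;> interval_cases j <;> first | omega | (norm_num; assumption)
  have hCb : FC.card ≤ (r - 1) * (r - 1) := by
    apply my_half_bound r H hcard hlin hxy hy hf₀H hef₀
    intro s hsC
    obtain ⟨hsF, b', hb's, hb'e, hyb', hnc⟩ := Finset.mem_filter.1 hsC
    obtain ⟨a, b, z, haH, hbH, hae, hbe, hab, hsEq, hea, heb, hzab, hzne⟩ := hF s hsF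
    have hb'b : b' = b := by
      have hmem : b' ∈ ({e₀, a, b} : Finset (Finset (Fin n))) := hsEq ▸ hb's
      simp only [Finset.mem_insert, Finset.mem_singleton] at hmem
      rcases hmem with rfl | rfl | rfl
      · exact absurd rfl hb'e
      · exfalso
        have : y ∈ e₀ ∩ b' := Finset.mem_inter.2 ⟨hy, hyb'⟩
        rw [hea, Finset.mem_singleton] at this
        exact hxy this.symm
      · rfl
    rw [hb'b] at hnc
    exact ⟨a, b, z, haH, hbH, hae, hbe, hab, hsEq, hea, heb, hzab, hzne, hnc⟩
  have hDb : FD.card ≤ (r - 1) * (r - 1) := by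
    apply my_half_bound r H hcard hlin hxy.symm hx hg₀H heg₀
    intro s hsD
    obtain ⟨hsF, a', ha's, ha'e, hxa', hnc⟩ := Finset.mem_filter.1 hsD
    obtain ⟨a, b, z, haH, hbH, hae, hbe, hab, hsEq, hea, heb, hzab, hzne⟩ := hF s hsF
    have ha'a : a' = a := by
      have hmem : a' ∈ ({e₀, a, b} : Finset (Finset (Fin n))) := hsEq ▸ ha's
      simp only [Finset.mem_insert, Finset.mem_singleton] at hmem
      rcases hmem with rfl | rfl | rfl
      · exact absurd rfl ha'e
      · rfl
      · exfalso
        have : x ∈ e₀ ∩ a' := Finset.mem_inter.2 ⟨hx, hxa'⟩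
        rw [heb, Finset.mem_singleton] at this
        exact hxy this
    rw [ha'a] at hnc
    rw [Finset.inter_comm] at hnc
    refine ⟨b, a, z, hbH, haH, hbe, hae, hab.symm, ?_, heb, hea,
      by rw [Finset.inter_comm]; exact hzab, hzne, hnc⟩
    rw [hsEq]; ext u; simp only [Finset.mem_insert, Finset.mem_singleton]; tauto
  calc F.card ≤ (FC ∪ FD).card := Finset.card_le_card hcover
    _ ≤ FC.card + FD.card := Finset.card_union_le _ _
    _ ≤ 2 * ((r - 1) * (r - 1)) := by omega

end Aux

/-- Let `r ≥ 3` and let `H` be a linear `r`-graph on `[n]` with no copy of `C₄ʳ`.  Then for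
every edge `e₀` of `H`, the number of copies of `C₃ʳ` in `H` containing `e₀` (identified
with their 3-element edge sets) is at most `C(r,2) · (4r² - 10r + 7)`. -/
theorem statement_19 (r n : ℕ) (hr : 3 ≤ r) (H : Finset (Finset (Fin n)))
    (hcard : ∀ e ∈ H, e.card = r)
    (hlin : ∀ e ∈ H, ∀ f ∈ H, e ≠ f → (e ∩ f).card ≤ 1)
    (hC4 : ¬ HasLinearCycle H 4) :
    ∀ e₀ ∈ H,
      (Nat.card {s : Finset (Finset (Fin n)) //
          s ⊆ H ∧ s.card = 3 ∧ e₀ ∈ s ∧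
          ∃ f : ℕ → Finset (Fin n), (∀ i < 3, f i ∈ s) ∧ IsLinearCycleOf 3 f} : ℝ) ≤
        (r.choose 2 : ℝ) * (4 * (r : ℝ) ^ 2 - 10 * r + 7) := by
  intro e₀ he₀
  classical
  rw [Nat.card_eq_fintype_card, Fintype.card_subtype]
  set P : Finset (Finset (Fin n)) → Prop := fun s =>
    s ⊆ H ∧ s.card = 3 ∧ e₀ ∈ s ∧
      ∃ f : ℕ → Finset (Fin n), (∀ i < 3, f i ∈ s) ∧ IsLinearCycleOf 3 f with hPdef
  have hkeymem : ∀ s ∈ Finset.univ.filter P,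
      e₀ ∩ ((s.erase e₀).sup id) ∈ e₀.powersetCard 2 := by
    intro s hs
    obtain ⟨hsub, h3, he, hf⟩ := (Finset.mem_filter.1 hs).2
    obtain ⟨a, b, has, hbs, hae, hbe, hab, hsEq, ca, cb, cab, nab, -, -⟩ :=
      my_tri_structure h3 he hf
    obtain ⟨xa, hxa⟩ := Finset.card_eq_one.mp ca
    obtain ⟨xb, hxb⟩ := Finset.card_eq_one.mp cb
    have hkeyeq : e₀ ∩ ((s.erase e₀).sup id) = {xa, xb} := by
      rw [hsEq, my_erase_pair hae hbe]
      have hsup : ({a, b} : Finset (Finset (Fin n))).sup id = a ∪ b := by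
        simp [Finset.sup_insert, Finset.sup_singleton]
      rw [hsup, Finset.inter_union_distrib_left, hxa, hxb]
      rfl
    rw [hkeyeq]
    refine Finset.mem_powersetCard.2 ⟨?_, ?_⟩
    · intro u hu
      simp only [Finset.mem_insert, Finset.mem_singleton] at hu
      rcases hu with rfl | rfl
      · exact (Finset.mem_inter.1 (hxa ▸ Finset.mem_singleton_self u)).1
      · exact (Finset.mem_inter.1 (hxb ▸ Finset.mem_singleton_self u)).1
    · have hne : xa ≠ xb := fun h => nab (by rw [hxa, hxb, h])
      rw [Finset.card_insert_of_notMem (by simpa using hne), Finset.card_singleton]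
  have hfib := Finset.card_eq_sum_card_fiberwise hkeymem
  have hbound : ∀ p ∈ e₀.powersetCard 2,
      ((Finset.univ.filter P).filter
        (fun s => e₀ ∩ ((s.erase e₀).sup id) = p)).card ≤ 2 * ((r - 1) * (r - 1)) := by
    intro p hp
    obtain ⟨hsubp, hcardp⟩ := Finset.mem_powersetCard.1 hp
    obtain ⟨x, y, hxy, rfl⟩ := Finset.card_eq_two.1 hcardp
    have hx : x ∈ e₀ := hsubp (by simp)
    have hy : y ∈ e₀ := hsubp (by simp)
    apply my_fiber_bound r H hcard hlin hC4 hxy hx hy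
    intro s hs
    obtain ⟨hsT, hks⟩ := Finset.mem_filter.1 hs
    obtain ⟨hsub, h3, he, hf⟩ := (Finset.mem_filter.1 hsT).2
    exact my_fiber_structure H hlin hxy hsub h3 he hf hks
  have hnat : (Finset.univ.filter P).card ≤ r.choose 2 * (2 * ((r - 1) * (r - 1))) := by
    rw [hfib]
    calc ∑ p ∈ e₀.powersetCard 2,
          ((Finset.univ.filter P).filter
            (fun s => e₀ ∩ ((s.erase e₀).sup id) = p)).card
        ≤ (e₀.powersetCard 2).card • (2 * ((r - 1) * (r - 1))) :=
          Finset.sum_le_card_nsmul _ _ _ hbound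
      _ = r.choose 2 * (2 * ((r - 1) * (r - 1))) := by
          rw [smul_eq_mul, Finset.card_powersetCard, hcard e₀ he₀]
  have h1r : (1 : ℝ) ≤ (r : ℝ) := by exact_mod_cast le_trans (by norm_num) hr
  have h3r : (3 : ℝ) ≤ (r : ℝ) := by exact_mod_cast hr
  have hr1 : (1 : ℕ) ≤ r := by omega
  have hcast : ((Finset.univ.filter P).card : ℝ) ≤
      (r.choose 2 : ℝ) * (2 * (((r : ℝ) - 1) * ((r : ℝ) - 1))) := by
    calc ((Finset.univ.filter P).card : ℝ)
        ≤ ((r.choose 2 * (2 * ((r - 1) * (r - 1))) : ℕ) : ℝ) := Nat.cast_le.2 hnat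
      _ = (r.choose 2 : ℝ) * (2 * (((r : ℝ) - 1) * ((r : ℝ) - 1))) := by
          rw [Nat.cast_mul, Nat.cast_mul, Nat.cast_mul, Nat.cast_sub hr1]
          norm_num
  refine le_trans hcast ?_
  apply mul_le_mul_of_nonneg_left ?_ (by positivity)
  nlinarith [h3r]
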